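/- If Ω is a compact continuous signature and 𝐀 = (A, E) is an affinely bounded topological Ω-algebra, then 𝐀 is profinite if and only if A is a totally disconnected compact Hausdorff space. -/

import Mathlib

/-- A translation of the `Ω`-algebra `(A, E)`. -/
def IsTranslation {Ω : ℕ → Type} {A : Type} (E : ∀ n, Ω n → (Fin n → A) → A)
    (g : A → A) : Prop :=
  ∃ (n : ℕ) (ω : Ω n) (i : Fin n) (a : Fin n → A),
    g = fun x => E n ω (Function.update a i x)

/-- Membership in the translation monoid `M(𝐀)`. -/
inductive InTransMonoid {Ω : ℕ → Type} {A : Type} (E : ∀ n, Ω n → (Fin n → A) → A) :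
    (A → A) → Prop
  | id : InTransMonoid E (fun x => x)
  | comp {g f : A → A} : IsTranslation E g → InTransMonoid E f → InTransMonoid E (g ∘ f)

/-- A continuous homomorphism from the topological `Ω`-algebra `(A, E)` onto a finite
discrete topological `Ω`-algebra. -/
structure FinQuot (Ω : ℕ → Type) [∀ n, TopologicalSpace (Ω n)]
    (A : Type) [TopologicalSpace A] (E : ∀ n, Ω n → (Fin n → A) → A) where
  B : Type
  [tB : TopologicalSpace B]
  [finB : Finite B]
  [discB : DiscreteTopology B]
  op : ∀ n, Ω n → (Fin n → B) → B
  contOp : ∀ n, Continuous fun p : Ω n × (Fin n → B) => op n p.1 p.2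
  toFun : A → B
  cont : Continuous toFun
  hom : ∀ (n : ℕ) (ω : Ω n) (a : Fin n → A), toFun (E n ω a) = op n ω fun i => toFun (a i)

/-- A topological `Ω`-algebra is profinite if it is compact and residually finite. -/
def IsProfinite (Ω : ℕ → Type) [∀ n, TopologicalSpace (Ω n)]
    (A : Type) [TopologicalSpace A] (E : ∀ n, Ω n → (Fin n → A) → A) : Prop :=
  CompactSpace A ∧ ∀ x y : A, x ≠ y → ∃ q : FinQuot Ω A E, q.toFun x ≠ q.toFun y
/-- Ω-polynomials over `A` in a single variable `x`. -/
inductive PolyTerm (Ω : ℕ → Type) (A : Type) : Type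
  | var : PolyTerm Ω A
  | const : A → PolyTerm Ω A
  | app : (n : ℕ) → Ω n → (Fin n → PolyTerm Ω A) → PolyTerm Ω A

namespace PolyTerm

/-- Number of occurrences of the variable `x`; a term is linear in `x` iff this is `1`. -/
def varCount {Ω : ℕ → Type} {A : Type} : PolyTerm Ω A → ℕ
  | .var => 1
  | .const _ => 0
  | .app n _ ts => ∑ i : Fin n, varCount (ts i)

/-- The height of a term (constants and the variable have height `0`). -/
def height {Ω : ℕ → Type} {A : Type} : PolyTerm Ω A → ℕ
  | .var => 0
  | .const _ => 0
  | .app n _ ts => if n = 0 then 0 else (Finset.univ.sup fun i : Fin n => height (ts i)) + 1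

/-- The arity of a term. -/
def arity {Ω : ℕ → Type} {A : Type} : PolyTerm Ω A → ℕ
  | .var => 0
  | .const _ => 0
  | .app n _ ts => max n (Finset.univ.sup fun i : Fin n => arity (ts i))

/-- Evaluation of a polynomial as a unary function on `A` (the map `Ψ_𝐀`). -/
def eval {Ω : ℕ → Type} {A : Type} (E : ∀ n, Ω n → (Fin n → A) → A) :
    PolyTerm Ω A → A → A
  | .var, z => z
  | .const a, _ => a
  | .app n ω ts, z => E n ω fun i => eval E (ts i) z

end PolyTerm

/-- `𝐀 = (A, E)` is affinely bounded by `m`: the translation monoid consists exactly of the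
evaluations of linear `Ω`-polynomials over `A` in one variable of height `≤ m` and arity
`≤ m`. -/
def AffinelyBoundedBy {Ω : ℕ → Type} {A : Type} (E : ∀ n, Ω n → (Fin n → A) → A)
    (m : ℕ) : Prop :=
  {f : A → A | InTransMonoid E f} =
    {f : A → A | ∃ t : PolyTerm Ω A,
      t.varCount = 1 ∧ t.height ≤ m ∧ t.arity ≤ m ∧ f = PolyTerm.eval E t}

/-- `𝐀` is affinely bounded if it is affinely bounded by some `m ∈ ℕ`. -/
def AffinelyBounded {Ω : ℕ → Type} {A : Type} (E : ∀ n, Ω n → (Fin n → A) → A) : Prop :=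
  ∃ m : ℕ, AffinelyBoundedBy E m


section Profinite8Aux

variable {Ω : ℕ → Type} {A : Type}

/-- One composition layer: either a translation datum `(n, i, ω, a)` with `n ≤ m`,
or a placeholder for the identity. -/
abbrev TLayer (Ω : ℕ → Type) (A : Type) (m : ℕ) : Type :=
  (Σ p : Σ n : Fin (m + 1), Fin (n : ℕ), Ω ((p.1 : ℕ)) × (Fin ((p.1 : ℕ)) → A)) ⊕ Unit

/-- Apply one layer as a unary map on `A`. -/
def applyLayer (E : ∀ n, Ω n → (Fin n → A) → A) {m : ℕ} : TLayer Ω A m → A → A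
  | Sum.inl ⟨⟨n, i⟩, ω, a⟩, z => E n ω (Function.update a i z)
  | Sum.inr _, z => z

/-- Evaluate a list of layers as a composition of unary maps. -/
def evL (E : ∀ n, Ω n → (Fin n → A) → A) {m : ℕ} : List (TLayer Ω A m) → A → A
  | [], z => z
  | s :: l, z => applyLayer E s (evL E l z)

lemma evL_mem (E : ∀ n, Ω n → (Fin n → A) → A) {m : ℕ} :
    ∀ l : List (TLayer Ω A m), InTransMonoid E (evL E l)
  | [] => by
      have h : evL E ([] : List (TLayer Ω A m)) = fun z => z := funext fun z => rfl
      rw [h]; exact InTransMonoid.id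
  | (Sum.inl ⟨⟨n, i⟩, ω, a⟩) :: l => by
      have h : evL E ((Sum.inl ⟨⟨n, i⟩, ω, a⟩ : TLayer Ω A m) :: l)
          = (fun z => E n ω (Function.update a i z)) ∘ evL E l := funext fun z => rfl
      rw [h]
      exact InTransMonoid.comp ⟨n, ω, i, a, rfl⟩ (evL_mem E l)
  | (Sum.inr ()) :: l => by
      have h : evL E ((Sum.inr () : TLayer Ω A m) :: l) = evL E l := funext fun z => rfl
      rw [h]; exact evL_mem E l

lemma inTransMonoid_comp_right {E : ∀ n, Ω n → (Fin n → A) → A} {f g : A → A}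
    (hf : InTransMonoid E f) (hg : IsTranslation E g) : InTransMonoid E (f ∘ g) := by
  induction hf with
  | id =>
      have h : ((fun x : A => x) ∘ g) = g ∘ (fun x : A => x) := rfl
      rw [h]; exact InTransMonoid.comp hg InTransMonoid.id
  | comp hh _ ih =>
      have h2 := InTransMonoid.comp hh ih
      exact h2

lemma evL_replicate (E : ∀ n, Ω n → (Fin n → A) → A) {m : ℕ} (k : ℕ) (z : A) :
    evL E (List.replicate k (Sum.inr () : TLayer Ω A m)) z = z := by
  induction k with
  | zero => rfl
  | succ k ih =>
      rw [List.replicate_succ]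
      show applyLayer E (Sum.inr ()) (evL E (List.replicate k (Sum.inr ())) z) = z
      rw [ih]
      rfl

lemma evL_append_pad (E : ∀ n, Ω n → (Fin n → A) → A) {m : ℕ}
    (l : List (TLayer Ω A m)) (k : ℕ) (z : A) :
    evL E (l ++ List.replicate k (Sum.inr ())) z = evL E l z := by
  induction l with
  | nil => exact evL_replicate E k z
  | cons s l ih =>
      show applyLayer E s (evL E (l ++ List.replicate k (Sum.inr ())) z) = _
      rw [ih]; rfl

lemma code_exists (E : ∀ n, Ω n → (Fin n → A) → A) {m : ℕ} (l : List (TLayer Ω A m))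
    (hl : l.length ≤ m) :
    ∃ c : Fin m → TLayer Ω A m, ∀ z, evL E (List.ofFn c) z = evL E l z := by
  classical
  have hLlen : (l ++ List.replicate (m - l.length) (Sum.inr () : TLayer Ω A m)).length = m := by
    simp; omega
  refine ⟨fun j => (l ++ List.replicate (m - l.length) (Sum.inr ()))[(j : ℕ)]'(by rw [hLlen]; exact j.isLt), ?_⟩
  have hofn : List.ofFn (fun j : Fin m =>
      (l ++ List.replicate (m - l.length) (Sum.inr () : TLayer Ω A m))[(j : ℕ)]'(by rw [hLlen]; exact j.isLt))
      = l ++ List.replicate (m - l.length) (Sum.inr ()) := by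
    apply List.ext_getElem
    · simp [hLlen]
    · intro i h1 h2
      simp [List.getElem_ofFn]
  intro z
  rw [hofn]
  exact evL_append_pad E l _ z

lemma sum_eq_one_exists {n : ℕ} {f : Fin n → ℕ} (h : ∑ i, f i = 1) :
    ∃ i, f i = 1 ∧ ∀ j, j ≠ i → f j = 0 := by
  have hex : ∃ i, f i ≠ 0 := by
    by_contra hc
    push_neg at hc
    rw [Finset.sum_eq_zero (fun i _ => hc i)] at h
    exact one_ne_zero h.symm
  obtain ⟨i, hi⟩ := hex
  have hle : f i ≤ 1 := h ▸ Finset.single_le_sum (f := f) (fun j _ => Nat.zero_le _) (Finset.mem_univ i)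
  have hfi : f i = 1 := by omega
  refine ⟨i, hfi, fun j hj => ?_⟩
  have hsplit : f i + ∑ j ∈ Finset.univ.erase i, f j = 1 := by
    rw [Finset.add_sum_erase _ f (Finset.mem_univ i)]; exact h
  have hz : ∑ j ∈ Finset.univ.erase i, f j = 0 := by omega
  exact (Finset.sum_eq_zero_iff).mp hz j (Finset.mem_erase.mpr ⟨hj, Finset.mem_univ j⟩)

lemma eval_const (E : ∀ n, Ω n → (Fin n → A) → A) :
    ∀ {t : PolyTerm Ω A}, t.varCount = 0 →
      ∀ x y : A, PolyTerm.eval E t x = PolyTerm.eval E t y := by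
  intro t
  induction t with
  | var => intro h; simp [PolyTerm.varCount] at h
  | const a => intro _ x y; rfl
  | app n ω ts ih =>
      intro h x y
      simp only [PolyTerm.varCount] at h
      rw [Finset.sum_eq_zero_iff] at h
      simp only [PolyTerm.eval]
      congr 1
      funext i
      exact ih i (h i (Finset.mem_univ i)) x y

lemma decomp (E : ∀ n, Ω n → (Fin n → A) → A) {m : ℕ} :
    ∀ {t : PolyTerm Ω A}, t.varCount = 1 → t.arity ≤ m → ∀ x₀ : A,
      ∃ l : List (TLayer Ω A m), l.length ≤ t.height ∧
        ∀ z, PolyTerm.eval E t z = evL E l z := by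
  intro t
  induction t with
  | var =>
      intro _ _ _
      exact ⟨[], by simp [PolyTerm.height], fun z => rfl⟩
  | const a => intro h; simp [PolyTerm.varCount] at h
  | app n ω ts ih =>
      intro hvc har x₀
      classical
      simp only [PolyTerm.varCount] at hvc
      simp only [PolyTerm.arity] at har
      obtain ⟨i, h1, h0⟩ := sum_eq_one_exists hvc
      have hnm : n ≤ m := le_trans (le_max_left _ _) har
      have hari : (ts i).arity ≤ m :=
        le_trans (le_trans (Finset.le_sup (f := fun i => (ts i).arity) (Finset.mem_univ i))
          (le_max_right n (Finset.univ.sup fun i => (ts i).arity))) har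
      obtain ⟨l', hl'len, hl'⟩ := ih i h1 hari x₀
      have hn0 : n ≠ 0 := i.pos.ne'
      refine ⟨Sum.inl ⟨⟨⟨n, Nat.lt_succ_of_le hnm⟩, i⟩, ω,
        fun j => PolyTerm.eval E (ts j) x₀⟩ :: l', ?_, ?_⟩
      · simp only [List.length_cons, PolyTerm.height, if_neg hn0]
        exact Nat.succ_le_succ (le_trans hl'len
          (Finset.le_sup (f := fun i => (ts i).height) (Finset.mem_univ i)))
      · intro z
        have hrfl : evL E ((Sum.inl ⟨⟨⟨n, Nat.lt_succ_of_le hnm⟩, i⟩, ω,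
            fun j => PolyTerm.eval E (ts j) x₀⟩ : TLayer Ω A m) :: l') z
            = E n ω (Function.update (fun j => PolyTerm.eval E (ts j) x₀) i (evL E l' z)) := rfl
        rw [hrfl, ← hl' z]
        show PolyTerm.eval E (.app n ω ts) z = _
        simp only [PolyTerm.eval]
        congr 1
        funext j
        rcases eq_or_ne j i with hj | hj
        · subst hj; rw [Function.update_self]
        · rw [Function.update_of_ne hj]
          exact eval_const E (h0 j hj) z x₀

variable [∀ n, TopologicalSpace (Ω n)] [TopologicalSpace A]

lemma applyLayer_continuous (E : ∀ n, Ω n → (Fin n → A) → A)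
    (hE : ∀ n, Continuous fun p : Ω n × (Fin n → A) => E n p.1 p.2) (m : ℕ) :
    Continuous fun p : TLayer Ω A m × A => applyLayer E p.1 p.2 := by
  classical
  apply (Homeomorph.comp_continuous_iff' (Homeomorph.sumProdDistrib).symm).mp
  rw [continuous_sum_dom]
  constructor
  · show Continuous fun q : (Σ p : Σ n : Fin (m + 1), Fin (n : ℕ),
        Ω ((p.1 : ℕ)) × (Fin ((p.1 : ℕ)) → A)) × A => applyLayer E (Sum.inl q.1) q.2
    have hfS : Continuous fun q : (Σ p : Σ n : Fin (m + 1), Fin (n : ℕ),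
        (Ω ((p.1 : ℕ)) × (Fin ((p.1 : ℕ)) → A)) × A) =>
        E ((q.1.1 : ℕ)) q.2.1.1 (Function.update q.2.1.2 q.1.2 q.2.2) := by
      apply continuous_sigma
      intro p
      show Continuous fun a : (Ω ((p.1 : ℕ)) × (Fin ((p.1 : ℕ)) → A)) × A =>
        E ((p.1 : ℕ)) a.1.1 (Function.update a.1.2 p.2 a.2)
      have hg : Continuous fun a : (Ω ((p.1 : ℕ)) × (Fin ((p.1 : ℕ)) → A)) × A =>
          ((a.1.1, Function.update a.1.2 p.2 a.2) : Ω ((p.1 : ℕ)) × (Fin ((p.1 : ℕ)) → A)) := by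
        refine Continuous.prodMk (continuous_fst.comp continuous_fst) ?_
        apply continuous_pi
        intro j
        by_cases hj : j = p.2
        · subst hj
          simp only [Function.update_self]
          exact continuous_snd
        · simp only [Function.update_of_ne hj]
          exact (continuous_apply j).comp (continuous_snd.comp continuous_fst)
      exact (hE ((p.1 : ℕ))).comp hg
    exact hfS.comp (Homeomorph.continuous Homeomorph.sigmaProdDistrib)
  · exact continuous_snd

lemma evL_ofFn_continuous (E : ∀ n, Ω n → (Fin n → A) → A)
    (hE : ∀ n, Continuous fun p : Ω n × (Fin n → A) => E n p.1 p.2) (m : ℕ) :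
    ∀ k, Continuous fun p : (Fin k → TLayer Ω A m) × A => evL E (List.ofFn p.1) p.2 := by
  intro k
  induction k with
  | zero =>
      show Continuous fun p : (Fin 0 → TLayer Ω A m) × A => evL E [] p.2
      exact continuous_snd
  | succ k ih =>
      have heq : (fun p : (Fin (k + 1) → TLayer Ω A m) × A => evL E (List.ofFn p.1) p.2)
          = fun p => applyLayer E (p.1 0)
              (evL E (List.ofFn fun i : Fin k => p.1 i.succ) p.2) := by
        funext p
        rw [List.ofFn_succ]
        rfl
      rw [heq]
      exact (applyLayer_continuous E hE m).comp
        (Continuous.prodMk ((continuous_apply 0).comp continuous_fst)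
          (ih.comp (Continuous.prodMk
            (continuous_pi fun i => (continuous_apply i.succ).comp continuous_fst)
            continuous_snd)))

end Profinite8Aux

/-- If `Ω` is a compact continuous signature and `𝐀 = (A, E)` is an affinely bounded
topological `Ω`-algebra, then `𝐀` is profinite iff `A` is a totally disconnected compact
Hausdorff space. -/
theorem statement8 (Ω : ℕ → Type) [∀ n, TopologicalSpace (Ω n)]
    [∀ n, CompactSpace (Ω n)]
    (A : Type) [TopologicalSpace A] (E : ∀ n, Ω n → (Fin n → A) → A)
    (hE : ∀ n, Continuous fun p : Ω n × (Fin n → A) => E n p.1 p.2)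
    (hbd : AffinelyBounded E) :
    IsProfinite Ω A E ↔
      (CompactSpace A ∧ T2Space A ∧ TotallyDisconnectedSpace A) := by
  classical
  constructor
  · rintro ⟨hc, hres⟩
    refine ⟨hc, ?_, ?_⟩
    · refine ⟨fun a b hab => ?_⟩
      obtain ⟨q, hq⟩ := hres a b hab
      letI := q.tB; haveI := q.discB
      refine ⟨q.toFun ⁻¹' {q.toFun a}, q.toFun ⁻¹' {q.toFun b},
        (isOpen_discrete _).preimage q.cont, (isOpen_discrete _).preimage q.cont,
        rfl, rfl, ?_⟩
      rw [Set.disjoint_left]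
      rintro c hca hcb
      exact hq (hca.symm.trans hcb)
    · haveI : TotallySeparatedSpace A := by
        refine ⟨fun a _ b _ hab => ?_⟩
        obtain ⟨q, hq⟩ := hres a b hab
        letI := q.tB; haveI := q.discB
        refine ⟨q.toFun ⁻¹' {q.toFun a}, (q.toFun ⁻¹' {q.toFun a})ᶜ,
          (isOpen_discrete _).preimage q.cont,
          (isOpen_discrete ({q.toFun a}ᶜ)).preimage q.cont, rfl,
          fun h => hq (Set.mem_singleton_iff.mp h).symm,
          fun z _ => (em (z ∈ q.toFun ⁻¹' {q.toFun a})).imp id id,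
          disjoint_compl_right⟩
      exact TotallySeparatedSpace.totallyDisconnectedSpace A
  · rintro ⟨hc, ht2, htd⟩
    haveI := hc; haveI := ht2; haveI := htd
    haveI : TotallySeparatedSpace A := loc_compact_t2_tot_disc_iff_tot_sep.mp htd
    refine ⟨hc, fun x y hxy => ?_⟩
    obtain ⟨U, hU, hxU, hyU⟩ := exists_isClopen_of_totally_separated hxy
    obtain ⟨m, hbm⟩ := hbd
    haveI : CompactSpace (TLayer Ω A m) := inferInstance
    -- the compact parameter space of bounded compositions of translations
    set T := Fin m → TLayer Ω A m with hT
    set ev : T → A → A := fun c z => evL E (List.ofFn c) z with hev_def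
    have hev : Continuous fun p : T × A => ev p.1 p.2 := evL_ofFn_continuous E hE m m
    have hev1 : ∀ c : T, Continuous (ev c) := fun c =>
      hev.comp (continuous_const.prodMk continuous_id)
    have himg1 : ∀ c : T, InTransMonoid E (ev c) := fun c => evL_mem E _
    have himg2 : ∀ f, InTransMonoid E f → ∃ c : T, ∀ z, f z = ev c z := by
      intro f hf
      have hmem : f ∈ {f : A → A | InTransMonoid E f} := hf
      rw [hbm] at hmem
      obtain ⟨t, hvc, hht, har, hfe⟩ := hmem
      obtain ⟨l, hlen, hevalt⟩ := decomp E hvc har x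
      obtain ⟨c, hcc⟩ := code_exists E l (le_trans hlen hht)
      exact ⟨c, fun z => by rw [hfe, hevalt z, ← hcc z]⟩
    -- the syntactic equivalence relation determined by `U`
    set r : A → A → Prop := fun a b => ∀ c : T, (ev c a ∈ U ↔ ev c b ∈ U) with hr
    have hrrefl : ∀ a, r a a := fun a c => Iff.rfl
    have hrsymm : ∀ {a b}, r a b → r b a := fun h c => (h c).symm
    have hrtrans : ∀ {a b d}, r a b → r b d → r a d := fun h1 h2 c => (h1 c).trans (h2 c)
    have hcompat : ∀ {g : A → A} {a b : A}, IsTranslation E g → r a b → r (g a) (g b) := by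
      intro g a b hg hab c
      obtain ⟨c', hc'⟩ := himg2 (ev c ∘ g) (inTransMonoid_comp_right (himg1 c) hg)
      have ha := hc' a
      have hb := hc' b
      simp only [Function.comp_apply] at ha hb
      rw [ha, hb]
      exact hab c'
    have hcong : ∀ (n : ℕ) (ω : Ω n) (aa bb : Fin n → A),
        (∀ i, r (aa i) (bb i)) → r (E n ω aa) (E n ω bb) := by
      intro n ω aa bb hab
      have key : ∀ j, j ≤ n →
          r (E n ω fun i => if (i : ℕ) < 0 then bb i else aa i)
            (E n ω fun i => if (i : ℕ) < j then bb i else aa i) := by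
        intro j hj
        induction j with
        | zero => exact hrrefl _
        | succ j ihj =>
          refine hrtrans (ihj (Nat.le_of_succ_le hj)) ?_
          have hjn : j < n := hj
          have hg : IsTranslation E (fun z => E n ω
              (Function.update (fun i => if (i : ℕ) < j then bb i else aa i) ⟨j, hjn⟩ z)) :=
            ⟨n, ω, ⟨j, hjn⟩, _, rfl⟩
          have hstep := hcompat hg (hab ⟨j, hjn⟩)
          have e1 : E n ω (Function.update (fun i : Fin n => if (i : ℕ) < j then bb i else aa i)
              ⟨j, hjn⟩ (aa ⟨j, hjn⟩)) = E n ω fun i => if (i : ℕ) < j then bb i else aa i := by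
            congr 1
            funext i
            rcases eq_or_ne i ⟨j, hjn⟩ with hi | hi
            · subst hi
              simp
            · rw [Function.update_of_ne hi]
          have e2 : E n ω (Function.update (fun i : Fin n => if (i : ℕ) < j then bb i else aa i)
              ⟨j, hjn⟩ (bb ⟨j, hjn⟩)) = E n ω fun i => if (i : ℕ) < j + 1 then bb i else aa i := by
            congr 1
            funext i
            rcases eq_or_ne i ⟨j, hjn⟩ with hi | hi
            · subst hi
              simp
            · rw [Function.update_of_ne hi]
              have hij : (i : ℕ) ≠ j := fun hh => hi (Fin.ext hh)
              by_cases hlt : (i : ℕ) < j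
              · rw [if_pos hlt, if_pos (Nat.lt_succ_of_lt hlt)]
              · rw [if_neg hlt, if_neg (by omega)]
          rwa [e1, e2] at hstep
      have h0 : (fun i : Fin n => if (i : ℕ) < 0 then bb i else aa i) = aa := by
        funext i; simp
      have hn : (fun i : Fin n => if (i : ℕ) < n then bb i else aa i) = bb := by
        funext i; simp [i.isLt]
      have hkey := key n le_rfl
      rwa [h0, hn] at hkey
    -- equivalence classes are clopen
    set K : A → Set A := fun a => {b | r a b} with hK
    have hKclosed : ∀ a, IsClosed (K a) := by
      intro a
      have : K a = ⋂ c : T, {b | ev c a ∈ U ↔ ev c b ∈ U} := by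
        ext b
        simp only [hK, Set.mem_setOf_eq, Set.mem_iInter, hr]
      rw [this]
      refine isClosed_iInter fun c => ?_
      by_cases h1 : ev c a ∈ U
      · have : {b | ev c a ∈ U ↔ ev c b ∈ U} = (ev c) ⁻¹' U := by
          ext b; simp [h1]
        rw [this]
        exact hU.isClosed.preimage (hev1 c)
      · have : {b | ev c a ∈ U ↔ ev c b ∈ U} = (ev c) ⁻¹' Uᶜ := by
          ext b; simp [h1]
        rw [this]
        exact (hU.isOpen.isClosed_compl).preimage (hev1 c)
    have hKopen : ∀ a, IsOpen (K a) := by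
      intro a
      rw [← isClosed_compl_iff]
      have himage : (K a)ᶜ = Prod.snd '' {p : T × A |
          (ev p.1 a ∈ U ∧ ev p.1 p.2 ∈ Uᶜ) ∨ (ev p.1 a ∈ Uᶜ ∧ ev p.1 p.2 ∈ U)} := by
        ext b
        simp only [Set.mem_compl_iff, hK, Set.mem_setOf_eq, Set.mem_image, hr]
        constructor
        · intro hb
          rw [not_forall] at hb
          obtain ⟨c, hcne⟩ := hb
          by_cases h1 : ev c a ∈ U
          · exact ⟨(c, b), Or.inl ⟨h1, fun h2 => hcne ⟨fun _ => h2, fun _ => h1⟩⟩, rfl⟩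
          · refine ⟨(c, b), Or.inr ⟨h1, ?_⟩, rfl⟩
            by_contra h2
            exact hcne ⟨fun h3 => absurd h3 h1, fun h3 => absurd h3 h2⟩
        · rintro ⟨⟨c, b'⟩, hcond, rfl⟩
          intro hall
          rcases hcond with ⟨h1, h2⟩ | ⟨h1, h2⟩
          · exact h2 ((hall c).mp h1)
          · exact h1 ((hall c).mpr h2)
      rw [himage]
      apply isClosedMap_snd_of_compactSpace
      have hg1 : Continuous fun p : T × A => ev p.1 a :=
        hev.comp (continuous_fst.prodMk continuous_const)
      exact ((hU.isClosed.preimage hg1).inter ((hU.isOpen.isClosed_compl).preimage hev)).union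
        (((hU.isOpen.isClosed_compl).preimage hg1).inter (hU.isClosed.preimage hev))
    -- the finite quotient
    set s : Setoid A := ⟨r, ⟨hrrefl, fun h => hrsymm h, fun h1 h2 => hrtrans h1 h2⟩⟩ with hs
    have hcover : (Set.univ : Set A) ⊆ ⋃ a : A, K a := fun b _ =>
      Set.mem_iUnion.mpr ⟨b, hrrefl b⟩
    obtain ⟨F, hF⟩ := isCompact_univ.elim_finite_subcover K hKopen hcover
    letI : TopologicalSpace (Quotient s) := ⊥
    haveI : DiscreteTopology (Quotient s) := ⟨rfl⟩
    haveI hQfin : Finite (Quotient s) := by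
      refine Finite.of_surjective (fun a : F => Quotient.mk s (a : A)) ?_
      intro q
      obtain ⟨b, rfl⟩ := Quotient.exists_rep q
      have hb := hF (Set.mem_univ b)
      rw [Set.mem_iUnion₂] at hb
      obtain ⟨a, haF, hab⟩ := hb
      refine ⟨⟨a, haF⟩, ?_⟩
      exact Quotient.sound (hab : r a b)
    have hmkcont : Continuous (Quotient.mk s) := by
      rw [continuous_def]
      intro V _
      have hpre : (Quotient.mk s) ⁻¹' V = ⋃ (a : A) (_ : Quotient.mk s a ∈ V), K a := by
        ext b
        simp only [Set.mem_preimage, Set.mem_iUnion]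
        constructor
        · intro hb
          exact ⟨b, hb, hrrefl b⟩
        · rintro ⟨a, ha, hab⟩
          have heq : Quotient.mk s b = Quotient.mk s a :=
            Quotient.sound (hrsymm (hab : r a b))
          rw [heq]
          exact ha
      rw [hpre]
      exact isOpen_iUnion fun a => isOpen_iUnion fun _ => hKopen a
    set op : ∀ n, Ω n → (Fin n → Quotient s) → Quotient s := fun n ω v =>
      Quotient.mk s (E n ω fun i => (v i).out) with hop
    have hhom : ∀ (n : ℕ) (ω : Ω n) (a : Fin n → A),
        Quotient.mk s (E n ω a) = op n ω fun i => Quotient.mk s (a i) := by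
      intro n ω a
      refine Quotient.sound ?_
      refine hcong n ω a (fun i => (Quotient.mk s (a i)).out) fun i => ?_
      exact hrsymm (Quotient.mk_out (a i) : r ((Quotient.mk s (a i)).out) (a i))
    have hopcont : ∀ n, Continuous fun p : Ω n × (Fin n → Quotient s) => op n p.1 p.2 := by
      intro n
      have heq : (fun p : Ω n × (Fin n → Quotient s) => op n p.1 p.2)
          = (Quotient.mk s) ∘ (fun q : Ω n × (Fin n → A) => E n q.1 q.2) ∘
            (fun p : Ω n × (Fin n → Quotient s) => (p.1, fun i => (p.2 i).out)) := rfl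
      rw [heq]
      have hout2 : Continuous fun v : Fin n → Quotient s => fun i => (v i).out :=
        continuous_of_discreteTopology
      exact hmkcont.comp ((hE n).comp (continuous_fst.prodMk (hout2.comp continuous_snd)))
    refine ⟨⟨Quotient s, op, hopcont, Quotient.mk s, hmkcont, hhom⟩, ?_⟩
    intro h
    obtain ⟨cid, hcid⟩ := himg2 (fun z => z) InTransMonoid.id
    have hrxy : r x y := Quotient.exact h
    have hiff := hrxy cid
    rw [← hcid x, ← hcid y] at hiff
    exact hyU (hiff.mp hxU)
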